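/- Let p > 1 and a,b ∈ ℝ with p(1+a)+b < 0 and b < −p. Assume (f,g) ∈ C²(ℝ)×C¹(ℝ) with supp f, supp g ⊂ {x : |x| ≤ R}, R ≥ 1, and ∫_ℝ g(x)dx > 0. Then there exist constants ε₂ = ε₂(g,p,a,b,R) > 0 and C > 0 independent of ε such that for every 0 < ε ≤ ε₂ and every T ≥ C ε^{−p(p−1)/(−p(1+a)−b)}, there is no continuous solution U ∈ C(ℝ×[0,T]) with supp U ⊂ {(x,t) : |x| ≤ t+R} of the integral equation U = ε u_t⁰ + L'_{a,b}(|U|^p). -/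

import Mathlib

open MeasureTheory Set
open scoped Classical

/-- Japanese bracket `⟨x⟩ = √(1+x²)`. -/
noncomputable def jb (x : ℝ) : ℝ := Real.sqrt (1 + x ^ 2)

/-- The operator `L'_{a,b}`. -/
noncomputable def Lab' (a b : ℝ) (v : ℝ → ℝ → ℝ) (x t : ℝ) : ℝ :=
    (1 / 2) * (∫ s in (0:ℝ)..t,
      v (x + t - s) s /
        (jb (s + jb (x + t - s)) ^ (1 + a) * jb (s - jb (x + t - s)) ^ (1 + b)))
  + (1 / 2) * (∫ s in (0:ℝ)..t,
      v (x - t + s) s /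
        (jb (s + jb (x - t + s)) ^ (1 + a) * jb (s - jb (x - t + s)) ^ (1 + b)))

/-- `u_t⁰(x,t) = (1/2){f'(x+t) − f'(x−t) + g(x+t) + g(x−t)}`. -/
noncomputable def ut0 (f g : ℝ → ℝ) (x t : ℝ) : ℝ :=
  (1 / 2) * (deriv f (x + t) - deriv f (x - t) + g (x + t) + g (x - t))

/-- Indicator `χ(x,t)` of the region `t − |x| > R`. -/
noncomputable def chiR (R x t : ℝ) : ℝ := if R < t - |x| then 1 else 0

/-- The weight function `w(x,t)`. -/
noncomputable def wgt (a R x t : ℝ) : ℝ :=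
  if 0 < a then chiR R x t * (1 + t - |x|) ^ (1 + a) + (1 - chiR R x t)
  else if a = 0 then
    chiR R x t * (1 + t - |x|) + (1 - chiR R x t) / Real.log (t + |x| + R)
  else if -1 ≤ a then
    chiR R x t * (1 + t - |x|) ^ (1 + a) + (1 - chiR R x t) * (t + |x| + R) ^ a
  else chiR R x t * (1 + t + |x|) ^ (1 + a) + (1 - chiR R x t) * (t + |x| + R) ^ a

/-- The weighted sup-norm `‖U‖ = sup_{ℝ×[0,T]} |w(x,t)U(x,t)|`. -/
noncomputable def wnorm (a R T : ℝ) (U : ℝ → ℝ → ℝ) : ℝ :=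
  ⨆ q : ℝ × Set.Icc (0:ℝ) T, |wgt a R q.1 (q.2 : ℝ) * U q.1 (q.2 : ℝ)|

/-- The quantity `E_{a,b}(T)`. -/
noncomputable def Eab (p a b R T : ℝ) : ℝ :=
  if 0 < a ∧ 0 < p * (1 + a) + b then 1
  else if a = 0 ∧ -p ≤ b then Real.log (T + 3 * R) ^ p
  else if 0 < a ∧ p * (1 + a) + b = 0 then Real.log (T + 3 * R)
  else if a < 0 ∧ -p ≤ b then (T + 2 * R) ^ (-(a * p))
  else (T + 2 * R) ^ (-(p * (1 + a)) - b)

/-- The quantity `D_a(T)`. -/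
noncomputable def Da (a R T : ℝ) : ℝ :=
  if 0 < a then 1
  else if a = 0 then Real.log (T + 3 * R)
  else (T + 2 * R) ^ (-a)

/-- The five regimes of parameters `(a,b)` appearing in the lifespan estimates. -/
def Regime (p a b : ℝ) : Prop :=
  (0 < a ∧ 0 < p * (1 + a) + b) ∨ (a = 0 ∧ -p ≤ b) ∨
  (0 < a ∧ p * (1 + a) + b = 0) ∨ (a < 0 ∧ -p ≤ b) ∨
  (p * (1 + a) + b < 0 ∧ b < -p)

/-- `u` is a classical solution of the IVP
`u_tt − u_xx = |u_t|^p / (⟨t+⟨x⟩⟩^{1+a}⟨t−⟨x⟩⟩^{1+b})` on `ℝ × [0,T]`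
with data `u(x,0) = εf(x)`, `u_t(x,0) = εg(x)`. -/
def IsClassicalSol (p a b ε T : ℝ) (f g : ℝ → ℝ) (u : ℝ → ℝ → ℝ) : Prop :=
  ContDiffOn ℝ 2 (fun q : ℝ × ℝ => u q.1 q.2)
    ((Set.univ : Set ℝ) ×ˢ Set.Icc (0:ℝ) T) ∧
  (∀ x t : ℝ, 0 < t → t < T →
    deriv (deriv (fun τ => u x τ)) t - deriv (deriv (fun y => u y t)) x
      = |deriv (fun τ => u x τ) t| ^ p /
          (jb (t + jb x) ^ (1 + a) * jb (t - jb x) ^ (1 + b))) ∧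
  (∀ x : ℝ, u x 0 = ε * f x) ∧
  (∀ x : ℝ, deriv (fun τ => u x τ) 0 = ε * g x)

/-- `U` is a continuous solution, supported in `{|x| ≤ t+R}`, of the integral
equation `U = ε u_t⁰ + L'_{a,b}(|U|^p)` on `ℝ × [0,T]`. -/
def IsIntSol (p a b R ε T : ℝ) (f g : ℝ → ℝ) (U : ℝ → ℝ → ℝ) : Prop :=
  ContinuousOn (fun q : ℝ × ℝ => U q.1 q.2)
    ((Set.univ : Set ℝ) ×ˢ Set.Icc (0:ℝ) T) ∧
  (∀ x t : ℝ, 0 ≤ t → t ≤ T → t + R < |x| → U x t = 0) ∧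
  (∀ x t : ℝ, 0 ≤ t → t ≤ T →
    U x t = ε * ut0 f g x t + Lab' a b (fun y s => |U y s| ^ p) x t)

lemma one_le_jb (x : ℝ) : 1 ≤ jb x := by
  have h1 := Real.sq_sqrt (show (0:ℝ) ≤ 1 + x^2 by positivity)
  have h2 := Real.sqrt_nonneg (1 + x^2)
  rw [jb]; nlinarith

lemma jb_pos (x : ℝ) : 0 < jb x := lt_of_lt_of_le one_pos (one_le_jb x)

lemma abs_le_jb (x : ℝ) : |x| ≤ jb x := by
  have h1 := Real.sq_sqrt (show (0:ℝ) ≤ 1 + x^2 by positivity)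
  have h2 := Real.sqrt_nonneg (1 + x^2)
  have h3 : |x|^2 = x^2 := sq_abs x
  have h4 := abs_nonneg x
  rw [jb]; nlinarith

lemma le_jb (x : ℝ) : x ≤ jb x := (le_abs_self x).trans (abs_le_jb x)

lemma jb_le (x : ℝ) : jb x ≤ 1 + |x| := by
  have h1 := Real.sq_sqrt (show (0:ℝ) ≤ 1 + x^2 by positivity)
  have h2 := Real.sqrt_nonneg (1 + x^2)
  have h3 : |x|^2 = x^2 := sq_abs x
  have h4 := abs_nonneg x
  rw [jb]; nlinarith

lemma jb_le' {x : ℝ} (hx : 0 ≤ x) : jb x ≤ 1 + x := by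
  have := jb_le x; rwa [abs_of_nonneg hx] at this

lemma continuous_jb : Continuous jb := by
  apply Real.continuous_sqrt.comp; continuity

lemma deriv_far {f : ℝ → ℝ} {R : ℝ} (h : ∀ x, R < |x| → f x = 0) {x : ℝ} (hx : R < |x|) :
    deriv f x = 0 := by
  have hopen : IsOpen {y : ℝ | R < |y|} := isOpen_lt continuous_const continuous_abs
  have hev : f =ᶠ[nhds x] (fun _ => 0) := by
    filter_upwards [hopen.mem_nhds hx] with y hy using h y hy
  rw [hev.deriv_eq, deriv_const]
lemma exists_pos_point (R : ℝ) (f g : ℝ → ℝ) (hR : 1 ≤ R) (hf : ContDiff ℝ 2 f)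
    (hg : ContDiff ℝ 1 g) (hsf : ∀ x : ℝ, R < |x| → f x = 0)
    (hsg : ∀ x : ℝ, R < |x| → g x = 0) (hgint : 0 < ∫ x : ℝ, g x) :
    ∃ β : ℝ, |β| ≤ R ∧ 0 < g β - deriv f β := by
  by_contra hcon
  push_neg at hcon
  have hfd : Continuous (deriv f) := (hf.iterate_deriv' 1 1).continuous
  have hgc : Continuous g := hg.continuous
  -- integral of deriv f over ℝ is 0
  have hsupp : Function.support (deriv f) ⊆ Ioc (-(R+1)) (R+1) := by
    intro x hx
    by_contra hxm
    apply hx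
    apply deriv_far hsf
    simp only [mem_Ioc, not_and_or, not_lt, not_le] at hxm
    rcases hxm with h | h
    · rw [abs_of_nonpos (by linarith)]; linarith
    · rw [abs_of_nonneg (by linarith)]; linarith
  have hint0 : ∫ x : ℝ, deriv f x = 0 := by
    rw [← intervalIntegral.integral_eq_integral_of_support_subset hsupp]
    rw [intervalIntegral.integral_deriv_eq_sub (fun x _ => (hf.differentiable (by norm_num)).differentiableAt)
      (hfd.continuousOn.intervalIntegrable)]
    rw [hsf (R+1) (by rw [abs_of_nonneg (by linarith)]; linarith),
      hsf (-(R+1)) (by rw [abs_of_nonpos (by linarith)]; linarith)]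
    ring
  -- pointwise g ≤ deriv f
  have hle : ∀ x, g x ≤ deriv f x := by
    intro x
    rcases le_or_gt (|x|) R with h | h
    · have := hcon x h; linarith
    · rw [hsg x h, deriv_far hsf h]
  -- integrabilities
  have hgi : Integrable g := by
    by_contra hni
    rw [integral_undef hni] at hgint; exact lt_irrefl _ hgint
  have hfi : Integrable (deriv f) := by
    apply Continuous.integrable_of_hasCompactSupport hfd
    exact HasCompactSupport.intro (isCompact_Icc (a := -(R+1)) (b := R+1))
      (fun x hx => by
        apply deriv_far hsf
        simp only [mem_Icc, not_and_or, not_le] at hx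
        rcases hx with h | h
        · rw [abs_of_nonpos (by linarith)]; linarith
        · rw [abs_of_nonneg (by linarith)]; linarith)
  have := MeasureTheory.integral_mono hgi hfi hle
  rw [hint0] at this
  linarith
section
variable {U : ℝ → ℝ → ℝ} {T p a b : ℝ}

lemma denom_pos (a b y z : ℝ) : 0 < jb y ^ (1 + a) * jb z ^ (1 + b) :=
  mul_pos (Real.rpow_pos_of_pos (jb_pos y) _) (Real.rpow_pos_of_pos (jb_pos z) _)

lemma integrand_nonneg (v : ℝ → ℝ) (s y z : ℝ) (hp : 0 < p) :
    0 ≤ |v s| ^ p / (jb y ^ (1 + a) * jb z ^ (1 + b)) :=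
  div_nonneg (Real.rpow_nonneg (abs_nonneg _) _) (denom_pos a b y z).le

lemma integrand_cont (hp : 0 < p)
    (hU : ContinuousOn (fun q : ℝ × ℝ => U q.1 q.2) ((Set.univ : Set ℝ) ×ˢ Set.Icc (0:ℝ) T))
    {φ : ℝ → ℝ} (hφ : Continuous φ) :
    ContinuousOn (fun s => |U (φ s) s| ^ p /
      (jb (s + jb (φ s)) ^ (1 + a) * jb (s - jb (φ s)) ^ (1 + b))) (Icc (0:ℝ) T) := by
  have hUc : ContinuousOn (fun s => U (φ s) s) (Icc (0:ℝ) T) := by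
    have hmap : MapsTo (fun s => ((φ s, s) : ℝ × ℝ)) (Icc (0:ℝ) T)
        ((Set.univ : Set ℝ) ×ˢ Set.Icc (0:ℝ) T) := fun s hs => ⟨trivial, hs⟩
    exact hU.comp (Continuous.continuousOn (by continuity)) hmap
  apply ContinuousOn.div
  · exact (hUc.abs).rpow_const (fun s _ => Or.inr hp.le)
  · apply ContinuousOn.mul
    · apply ContinuousOn.rpow_const
      · exact (continuous_jb.comp ((continuous_id.add (continuous_jb.comp hφ)))).continuousOn
      · exact fun s _ => Or.inl (jb_pos _).ne'
    · apply ContinuousOn.rpow_const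
      · exact (continuous_jb.comp ((continuous_id.sub (continuous_jb.comp hφ)))).continuousOn
      · exact fun s _ => Or.inl (jb_pos _).ne'
  · exact fun s _ => (denom_pos a b _ _).ne'

lemma integrand_integrable (hp : 0 < p)
    (hU : ContinuousOn (fun q : ℝ × ℝ => U q.1 q.2) ((Set.univ : Set ℝ) ×ˢ Set.Icc (0:ℝ) T))
    {φ : ℝ → ℝ} (hφ : Continuous φ) {t : ℝ} (ht0 : 0 ≤ t) (htT : t ≤ T) :
    IntervalIntegrable (fun s => |U (φ s) s| ^ p /
      (jb (s + jb (φ s)) ^ (1 + a) * jb (s - jb (φ s)) ^ (1 + b))) volume 0 t := by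
  apply ContinuousOn.intervalIntegrable
  rw [uIcc_of_le ht0]
  exact (integrand_cont hp hU hφ).mono (Icc_subset_Icc le_rfl htT)

lemma lab'_nonneg (hp : 0 < p) {x t : ℝ} (ht0 : 0 ≤ t) :
    0 ≤ Lab' a b (fun y s => |U y s| ^ p) x t := by
  have h1 : 0 ≤ ∫ s in (0:ℝ)..t, |U (x + t - s) s| ^ p /
      (jb (s + jb (x + t - s)) ^ (1 + a) * jb (s - jb (x + t - s)) ^ (1 + b)) :=
    intervalIntegral.integral_nonneg ht0 (fun s _ => integrand_nonneg _ _ _ _ hp)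
  have h2 : 0 ≤ ∫ s in (0:ℝ)..t, |U (x - t + s) s| ^ p /
      (jb (s + jb (x - t + s)) ^ (1 + a) * jb (s - jb (x - t + s)) ^ (1 + b)) :=
    intervalIntegral.integral_nonneg ht0 (fun s _ => integrand_nonneg _ _ _ _ hp)
  have : Lab' a b (fun y s => |U y s| ^ p) x t = (1/2) * (∫ s in (0:ℝ)..t, |U (x + t - s) s| ^ p /
      (jb (s + jb (x + t - s)) ^ (1 + a) * jb (s - jb (x + t - s)) ^ (1 + b)))
      + (1/2) * (∫ s in (0:ℝ)..t, |U (x - t + s) s| ^ p /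
      (jb (s + jb (x - t + s)) ^ (1 + a) * jb (s - jb (x - t + s)) ^ (1 + b))) := rfl
  rw [this]; positivity

lemma key_lower {h ρ : ℝ → ℝ} {t t1 t2 : ℝ} (h0 : 0 ≤ t1) (h12 : t1 ≤ t2) (h2 : t2 ≤ t)
    (hint : IntervalIntegrable h volume 0 t)
    (hnn : ∀ s ∈ Icc (0:ℝ) t, 0 ≤ h s)
    (hρint : IntervalIntegrable ρ volume t1 t2)
    (hρ : ∀ s ∈ Icc t1 t2, ρ s ≤ h s) :
    (∫ s in t1..t2, ρ s) ≤ ∫ s in (0:ℝ)..t, h s := by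
  have ht : (0:ℝ) ≤ t := h0.trans (h12.trans h2)
  have hsub1 : IntervalIntegrable h volume 0 t1 := by
    apply hint.mono_set
    rw [uIcc_of_le ht, uIcc_of_le h0]
    exact Icc_subset_Icc le_rfl (h12.trans h2)
  have hsub2 : IntervalIntegrable h volume t1 t2 := by
    apply hint.mono_set
    rw [uIcc_of_le ht, uIcc_of_le h12]
    exact Icc_subset_Icc h0 h2
  have hsub3 : IntervalIntegrable h volume t2 t := by
    apply hint.mono_set
    rw [uIcc_of_le ht, uIcc_of_le h2]
    exact Icc_subset_Icc (h0.trans h12) le_rfl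
  have e1 : (∫ s in (0:ℝ)..t1, h s) + (∫ s in t1..t, h s) = ∫ s in (0:ℝ)..t, h s :=
    intervalIntegral.integral_add_adjacent_intervals hsub1 (hsub2.trans hsub3)
  have e2 : (∫ s in t1..t2, h s) + (∫ s in t2..t, h s) = ∫ s in t1..t, h s :=
    intervalIntegral.integral_add_adjacent_intervals hsub2 hsub3
  have n1 : 0 ≤ ∫ s in (0:ℝ)..t1, h s :=
    intervalIntegral.integral_nonneg h0 (fun s hs => hnn s ⟨hs.1, hs.2.trans (h12.trans h2)⟩)
  have n3 : 0 ≤ ∫ s in t2..t, h s :=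
    intervalIntegral.integral_nonneg h2 (fun s hs => hnn s ⟨h0.trans (h12.trans hs.1), hs.2⟩)
  have m : (∫ s in t1..t2, ρ s) ≤ ∫ s in t1..t2, h s :=
    intervalIntegral.integral_mono_on h12 hρint hsub2 hρ
  linarith
end
lemma riccati (p e c t0 t1 : ℝ) (h k : ℝ → ℝ) (hp : 1 < p) (he : 0 < e)
    (hc : 0 < c) (ht : t0 ≤ t1) (hh : Continuous h) (hk : Continuous k)
    (hhnn : ∀ s, 0 ≤ h s) (hknn : ∀ s, 0 ≤ k s)
    (hrel : ∀ t ∈ Icc t0 t1, (e + (1/2) * ∫ s in t0..t, h s) ^ p * k t ≤ c * h t) :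
    (p - 1) / (2 * c) * ∫ s in t0..t1, k s ≤ e ^ (1 - p) := by
  set G : ℝ → ℝ := fun t => e + (1/2) * ∫ s in t0..t, h s with hG
  have hGd : ∀ t : ℝ, HasDerivAt G ((1/2) * h t) t := by
    intro t
    have : HasDerivAt (fun u => ∫ s in t0..u, h s) (h t) t :=
      intervalIntegral.integral_hasDerivAt_right (hh.intervalIntegrable _ _)
        (hh.stronglyMeasurableAtFilter _ _) hh.continuousAt
    exact (this.const_mul (1/2)).const_add e
  have hGc : Continuous G := by
    have : Differentiable ℝ G := fun t => (hGd t).differentiableAt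
    exact this.continuous
  have hGe : ∀ t ∈ Icc t0 t1, e ≤ G t := by
    intro t htm
    have : 0 ≤ ∫ s in t0..t, h s :=
      intervalIntegral.integral_nonneg htm.1 (fun s _ => hhnn s)
    simp only [hG]; linarith
  have hGpos : ∀ t ∈ Icc t0 t1, 0 < G t := fun t htm => lt_of_lt_of_le he (hGe t htm)
  -- derivative of ψ = G ^ (1-p)
  have hψd : ∀ t ∈ Icc t0 t1, HasDerivAt (fun u => G u ^ (1 - p))
      (1 / 2 * h t * (1 - p) * G t ^ (1 - p - 1)) t := by
    intro t htm
    exact (hGd t).rpow_const (Or.inl (hGpos t htm).ne')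
  have hψptwise : ∀ t ∈ Icc t0 t1,
      1 / 2 * h t * (1 - p) * G t ^ (1 - p - 1) ≤ -((p-1)/(2*c)) * k t := by
    intro t htm
    have hGp := hGpos t htm
    have hA : (0:ℝ) < G t ^ (1 - p - 1) := Real.rpow_pos_of_pos hGp _
    have hrel' := hrel t htm
    have hid : G t ^ (1 - p - 1) * G t ^ p = 1 := by
      rw [← Real.rpow_add hGp]
      norm_num
    -- (1-p)/2 * A * h t ≤ (1-p)/2 * A * (G^p k t / c)
    have h1 : G t ^ p * k t / c ≤ h t := by
      rw [div_le_iff₀ hc] at *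
      linarith [hrel']
    have h2 : 1 / 2 * h t * (1 - p) * G t ^ (1 - p - 1)
        ≤ (1 - p) * G t ^ (1 - p - 1) * ((1/2) * (G t ^ p * k t / c)) := by
      have hneg : (1 - p) * G t ^ (1 - p - 1) * (1/2) < 0 := by nlinarith
      nlinarith [h1]
    calc 1 / 2 * h t * (1 - p) * G t ^ (1 - p - 1)
        ≤ (1 - p) * G t ^ (1 - p - 1) * ((1/2) * (G t ^ p * k t / c)) := h2
      _ = -((p-1)/(2*c)) * k t * (G t ^ (1 - p - 1) * G t ^ p) := by ring
      _ = -((p-1)/(2*c)) * k t := by rw [hid]; ring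
  -- FTC
  have hcontint : IntervalIntegrable (fun t => 1 / 2 * h t * (1 - p) * G t ^ (1 - p - 1))
      volume t0 t1 := by
    apply ContinuousOn.intervalIntegrable
    rw [uIcc_of_le ht]
    exact ((continuousOn_const.mul hh.continuousOn).mul continuousOn_const).mul
      ((hGc.continuousOn).rpow_const (fun t htm => Or.inl (hGpos t htm).ne'))
  have hFTC : (∫ t in t0..t1, 1 / 2 * h t * (1 - p) * G t ^ (1 - p - 1))
      = G t1 ^ (1 - p) - G t0 ^ (1 - p) := by
    apply intervalIntegral.integral_eq_sub_of_hasDerivAt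
    · intro t htm
      rw [uIcc_of_le ht] at htm
      exact hψd t htm
    · exact hcontint
  have hmono : (∫ t in t0..t1, 1 / 2 * h t * (1 - p) * G t ^ (1 - p - 1))
      ≤ ∫ t in t0..t1, -((p-1)/(2*c)) * k t :=
    intervalIntegral.integral_mono_on ht hcontint
      ((continuous_const.mul hk).intervalIntegrable _ _) hψptwise
  rw [hFTC, intervalIntegral.integral_const_mul] at hmono
  have hG0 : G t0 = e := by simp [hG]
  have hψ1pos : 0 < G t1 ^ (1 - p) :=
    Real.rpow_pos_of_pos (hGpos t1 ⟨ht, le_rfl⟩) _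
  rw [hG0] at hmono
  nlinarith [hmono, hψ1pos]
lemma engine (p e t0 t1 : ℝ) (Φ K k : ℝ → ℝ)
    (hp : 1 < p) (he : 0 < e) (ht : t0 ≤ t1)
    (hΦ : Continuous Φ) (hK : Continuous K) (hk : Continuous k)
    (hKnn : ∀ s, 0 ≤ K s) (hknn : ∀ s, 0 ≤ k s)
    (hkK : ∀ s ∈ Icc t0 t1, k s ≤ K s)
    (hseed : ∀ t ∈ Icc t0 t1, e ≤ Φ t)
    (hgrow : ∀ t ∈ Icc t0 t1, (1/2) * (∫ s in t0..t, |Φ s| ^ p * K s) ≤ Φ t) :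
    (p - 1) / (2 * 2 ^ p) * ∫ s in t0..t1, k s ≤ e ^ (1 - p) := by
  have hp0 : (0:ℝ) < p := lt_trans one_pos hp
  set h : ℝ → ℝ := fun s => |Φ s| ^ p * K s with hh
  have hhc : Continuous h := (hΦ.abs.rpow_const (fun s => Or.inr hp0.le)).mul hK
  have hhnn : ∀ s, 0 ≤ h s := fun s => mul_nonneg (Real.rpow_nonneg (abs_nonneg _) _) (hKnn s)
  have hc : (0:ℝ) < 2 ^ p := Real.rpow_pos_of_pos two_pos _
  apply riccati p e (2 ^ p) t0 t1 h k hp he hc ht hhc hk hhnn hknn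
  intro t htm
  set G := e + (1/2) * ∫ s in t0..t, h s with hG
  have hint : 0 ≤ ∫ s in t0..t, h s :=
    intervalIntegral.integral_nonneg htm.1 (fun s _ => hhnn s)
  have hGpos : 0 < G := by simp only [hG]; linarith
  have hΦG : G / 2 ≤ Φ t := by
    have h1 := hseed t htm
    have h2 := hgrow t htm
    simp only [hG]; linarith
  have hΦpos : 0 < Φ t := lt_of_lt_of_le (by positivity) hΦG
  have habs : G / 2 ≤ |Φ t| := hΦG.trans (le_abs_self _)
  have h3 : (G / 2) ^ p ≤ |Φ t| ^ p :=
    Real.rpow_le_rpow (by positivity) habs hp0.le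
  have h4 : (G / 2) ^ p = G ^ p / 2 ^ p := Real.div_rpow hGpos.le (by norm_num : (0:ℝ) ≤ 2) p
  have h5 : G ^ p * k t ≤ G ^ p * K t :=
    mul_le_mul_of_nonneg_left (hkK t htm) (Real.rpow_nonneg hGpos.le _)
  have h6 : G ^ p * K t ≤ 2 ^ p * (|Φ t| ^ p * K t) := by
    have := mul_le_mul_of_nonneg_right h3 (hKnn t)
    rw [h4] at this
    have h2p : (0:ℝ) < 2 ^ p := hc
    calc G ^ p * K t = 2 ^ p * (G ^ p / 2 ^ p * K t) := by field_simp
      _ ≤ 2 ^ p * (|Φ t| ^ p * K t) := by nlinarith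
  exact le_trans h5 h6

lemma ut0_far {R : ℝ} (f g : ℝ → ℝ) (hR : 1 ≤ R)
    (hsf : ∀ x, R < |x| → f x = 0) (hsg : ∀ x, R < |x| → g x = 0)
    {x t : ℝ} (h1 : R < x + t) (h2 : x - t < -R) : ut0 f g x t = 0 := by
  have ha1 : R < |x + t| := lt_of_lt_of_le h1 (le_abs_self _)
  have ha2 : R < |x - t| := by
    rw [abs_of_neg (by linarith : x - t < 0)]; linarith
  unfold ut0
  rw [deriv_far hsf ha1, deriv_far hsf ha2, hsg _ ha1, hsg _ ha2]
  ring

lemma step1 {p a b R ε T c1 β1 β2 : ℝ} {f g : ℝ → ℝ} {U : ℝ → ℝ → ℝ}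
    (hp : 1 < p) (hR : 1 ≤ R) (hε : 0 ≤ ε)
    (hsf : ∀ x, R < |x| → f x = 0) (hsg : ∀ x, R < |x| → g x = 0)
    (hβ1 : -(2*R) ≤ β1)
    (hF : ∀ y ∈ Icc β1 β2, 2*c1 ≤ g y - deriv f y)
    (hUeq : ∀ x t : ℝ, 0 ≤ t → t ≤ T →
      U x t = ε * ut0 f g x t + Lab' a b (fun y s => |U y s| ^ p) x t)
    {η s : ℝ} (hη : η ∈ Icc β1 β2) (hs : 2*R+1 ≤ s) (hsT : s ≤ T) :
    ε * c1 ≤ U (η + s) s := by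
  have hp0 : (0:ℝ) < p := lt_trans one_pos hp
  have hs0 : (0:ℝ) ≤ s := by linarith
  rw [hUeq (η + s) s hs0 hsT]
  have hηR : -(2*R) ≤ η := le_trans hβ1 hη.1
  have hfar1 : R < |η + s + s| := by
    rw [abs_of_pos (by linarith : (0:ℝ) < η + s + s)]; linarith
  have harg : η + s - s = η := by ring
  have hut : ut0 f g (η + s) s = (1/2) * (0 - deriv f η + 0 + g η) := by
    unfold ut0
    rw [harg, deriv_far hsf hfar1, hsg _ hfar1]
  have hut2 : c1 ≤ ut0 f g (η + s) s := by
    have := hF η hη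
    rw [hut]; linarith
  have hlab := lab'_nonneg (U := U) (a := a) (b := b) hp0 (x := η + s) hs0
  nlinarith [mul_le_mul_of_nonneg_left hut2 hε]

set_option maxHeartbeats 1000000 in
lemma step2 {p a b R ε T c1 δ β : ℝ} {f g : ℝ → ℝ} {U : ℝ → ℝ → ℝ}
    (hp : 1 < p) (hb1 : 1 + b ≤ 0) (hR : 1 ≤ R) (hε : 0 < ε) (hc1 : 0 < c1)
    (hδ : 0 < δ) (hδR : δ ≤ R/2) (hβR : |β| ≤ R)
    (hsf : ∀ x, R < |x| → f x = 0) (hsg : ∀ x, R < |x| → g x = 0)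
    (hF : ∀ y ∈ Icc (β - δ) (β + δ), 2*c1 ≤ g y - deriv f y)
    (hUc : ContinuousOn (fun q : ℝ × ℝ => U q.1 q.2) ((Set.univ : Set ℝ) ×ˢ Set.Icc (0:ℝ) T))
    (hUeq : ∀ x t : ℝ, 0 ≤ t → t ≤ T →
      U x t = ε * ut0 f g x t + Lab' a b (fun y s => |U y s| ^ p) x t)
    {x t : ℝ} (ht0 : 0 ≤ t) (htT : t ≤ T) (hxt : 6*R+2 ≤ x + t) (hxt2 : x - t ≤ -(2*R)) :
    δ/2 * (ε*c1) ^ p / (max ((2:ℝ) ^ (1+a)) 1 * (x+t) ^ (1+a)) ≤ U x t := by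
  have hp0 : (0:ℝ) < p := lt_trans one_pos hp
  set Ka : ℝ := max ((2:ℝ) ^ (1+a)) 1 with hKa
  have hKa1 : (1:ℝ) ≤ Ka := le_max_right _ _
  have hKa0 : (0:ℝ) < Ka := by linarith
  have hβ1 : -(2*R) ≤ β - δ := by
    rcases abs_le.mp hβR with ⟨h1, h2⟩; linarith
  have hβ2 : β + δ ≤ 2*R := by
    rcases abs_le.mp hβR with ⟨h1, h2⟩; linarith
  set s1 : ℝ := (x + t - (β + δ))/2 with hs1
  set s2 : ℝ := (x + t - (β - δ))/2 with hs2
  have hs10 : 2*R + 1 ≤ s1 := by rw [hs1]; linarith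
  have hs12 : s1 ≤ s2 := by rw [hs1, hs2]; linarith
  have hs2t : s2 ≤ t := by rw [hs2]; linarith
  have hxtpos : (0:ℝ) < x + t := by linarith
  -- the equation
  rw [hUeq x t ht0 htT]
  rw [ut0_far f g hR hsf hsg (by linarith) (by linarith)]
  -- positivity of the second integral
  have hI2 : 0 ≤ ∫ s in (0:ℝ)..t, |U (x - t + s) s| ^ p /
      (jb (s + jb (x - t + s)) ^ (1 + a) * jb (s - jb (x - t + s)) ^ (1 + b)) :=
    intervalIntegral.integral_nonneg ht0 (fun s _ => integrand_nonneg _ _ _ _ hp0)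
  -- lower bound on the first integral
  set ρ : ℝ := (ε*c1) ^ p / (Ka * (x+t) ^ (1+a)) with hρ
  have hρpos : 0 < ρ := by
    apply div_pos (Real.rpow_pos_of_pos (by positivity) _)
    exact mul_pos hKa0 (Real.rpow_pos_of_pos hxtpos _)
  have hlow : ∀ s ∈ Icc s1 s2, ρ ≤ |U (x + t - s) s| ^ p /
      (jb (s + jb (x + t - s)) ^ (1 + a) * jb (s - jb (x + t - s)) ^ (1 + b)) := by
    intro s hsm
    have hsl : s1 ≤ s := hsm.1
    have hsu : s ≤ s2 := hsm.2
    have hηmem : x + t - 2*s ∈ Icc (β - δ) (β + δ) := by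
      constructor
      · rw [hs2] at hsu; linarith
      · rw [hs1] at hsl; linarith
    have hsR : 2*R + 1 ≤ s := le_trans hs10 hsl
    have hsT' : s ≤ T := le_trans (le_trans hsu hs2t) htT
    have hU1 : ε * c1 ≤ U (x + t - s) s := by
      have := step1 hp hR hε.le hsf hsg hβ1 hF hUeq hηmem hsR hsT'
      have harg : x + t - 2*s + s = x + t - s := by ring
      rwa [harg] at this
    have hεc1 : (0:ℝ) < ε * c1 := by positivity
    have hnum : (ε*c1) ^ p ≤ |U (x + t - s) s| ^ p := by
      apply Real.rpow_le_rpow hεc1.le _ hp0.le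
      exact le_trans hU1 (le_abs_self _)
    -- denominator bound
    have hXpos : (0:ℝ) ≤ x + t - s := by
      rw [hs2] at hsu; linarith
    have hjbX1 : jb (x + t - s) ≤ 1 + (x + t - s) := jb_le' hXpos
    have hjbX2 : x + t - s ≤ jb (x + t - s) := le_jb _
    have hz1 : x + t ≤ s + jb (x + t - s) := by linarith
    have hz2 : s + jb (x + t - s) ≤ x + t + 1 := by linarith
    have hw1 : x + t ≤ jb (s + jb (x + t - s)) := le_trans hz1 (le_jb _)
    have hw2 : jb (s + jb (x + t - s)) ≤ 2*(x+t) := by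
      have := jb_le' (by linarith : (0:ℝ) ≤ s + jb (x + t - s))
      linarith
    have hden1 : jb (s + jb (x + t - s)) ^ (1+a) ≤ Ka * (x+t) ^ (1+a) := by
      rcases le_or_gt 0 (1+a) with hA | hA
      · have h1 : jb (s + jb (x + t - s)) ^ (1+a) ≤ (2*(x+t)) ^ (1+a) :=
          Real.rpow_le_rpow (jb_pos _).le hw2 hA
        have h2 : ((2:ℝ)*(x+t)) ^ (1+a) = 2 ^ (1+a) * (x+t) ^ (1+a) :=
          Real.mul_rpow (by norm_num) hxtpos.le
        have h3 : (2:ℝ) ^ (1+a) ≤ Ka := le_max_left _ _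
        have h4 : (0:ℝ) < (x+t) ^ (1+a) := Real.rpow_pos_of_pos hxtpos _
        nlinarith
      · have h1 : jb (s + jb (x + t - s)) ^ (1+a) ≤ (x+t) ^ (1+a) :=
          Real.rpow_le_rpow_of_nonpos hxtpos hw1 hA.le
        have h4 : (0:ℝ) < (x+t) ^ (1+a) := Real.rpow_pos_of_pos hxtpos _
        nlinarith
    have hden2 : jb (s - jb (x + t - s)) ^ (1+b) ≤ 1 :=
      Real.rpow_le_one_of_one_le_of_nonpos (one_le_jb _) hb1
    have hdenpos := denom_pos a b (s + jb (x + t - s)) (s - jb (x + t - s))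
    have hden : jb (s + jb (x + t - s)) ^ (1+a) * jb (s - jb (x + t - s)) ^ (1+b)
        ≤ Ka * (x+t) ^ (1+a) := by
      have h5 : (0:ℝ) < jb (s + jb (x + t - s)) ^ (1+a) := Real.rpow_pos_of_pos (jb_pos _) _
      have h6 : (0:ℝ) < jb (s - jb (x + t - s)) ^ (1+b) := Real.rpow_pos_of_pos (jb_pos _) _
      nlinarith
    rw [hρ]
    exact div_le_div₀ (Real.rpow_nonneg (abs_nonneg _) _) hnum hdenpos hden
  have hint := integrand_integrable (U := U) (T := T) (a := a) (b := b) hp0 hUc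
    (continuous_const.sub continuous_id : Continuous (fun s : ℝ => x + t - s)) ht0 htT
  have hkey : (∫ s in s1..s2, (fun _ : ℝ => ρ) s) ≤ ∫ s in (0:ℝ)..t, |U (x + t - s) s| ^ p /
      (jb (s + jb (x + t - s)) ^ (1 + a) * jb (s - jb (x + t - s)) ^ (1 + b)) := by
    apply key_lower (by linarith : (0:ℝ) ≤ s1) hs12 hs2t hint
      (fun s _ => integrand_nonneg _ _ _ _ hp0) intervalIntegrable_const hlow
  rw [intervalIntegral.integral_const] at hkey
  have hs21 : s2 - s1 = δ := by rw [hs1, hs2]; ring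
  rw [hs21, smul_eq_mul] at hkey
  have hexp : Lab' a b (fun y s => |U y s| ^ p) x t =
      (1/2) * (∫ s in (0:ℝ)..t, |U (x + t - s) s| ^ p /
        (jb (s + jb (x + t - s)) ^ (1 + a) * jb (s - jb (x + t - s)) ^ (1 + b)))
      + (1/2) * (∫ s in (0:ℝ)..t, |U (x - t + s) s| ^ p /
        (jb (s + jb (x - t + s)) ^ (1 + a) * jb (s - jb (x - t + s)) ^ (1 + b))) := rfl
  rw [hexp]
  have : δ/2 * (ε*c1) ^ p / (Ka * (x+t) ^ (1+a)) = (1/2) * (δ * ρ) := by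
    rw [hρ]; ring
  rw [hKa] at this ⊢
  rw [this]
  linarith


set_option maxHeartbeats 2000000 in
theorem blow_up_subcritical (p a b R : ℝ) (f g : ℝ → ℝ)
    (hp : 1 < p) (hab : p * (1 + a) + b < 0) (hb : b < -p)
    (hR : 1 ≤ R) (hf : ContDiff ℝ 2 f) (hg : ContDiff ℝ 1 g)
    (hsf : ∀ x : ℝ, R < |x| → f x = 0) (hsg : ∀ x : ℝ, R < |x| → g x = 0) (hgint : 0 < ∫ x : ℝ, g x) :
    ∃ ε₂ : ℝ, 0 < ε₂ ∧ ∃ C : ℝ, 0 < C ∧ ∀ ε : ℝ, 0 < ε → ε ≤ ε₂ →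
      ∀ T : ℝ, C * ε ^ (-(p * (p - 1)) / (-(p * (1 + a)) - b)) ≤ T →
        ¬ ∃ U : ℝ → ℝ → ℝ, IsIntSol p a b R ε T f g U := by
  have hp0 : (0:ℝ) < p := lt_trans one_pos hp
  have hb1 : 1 + b ≤ 0 := by linarith
  -- choose β, δ
  obtain ⟨β, hβR, hFβ⟩ := exists_pos_point R f g hR hf hg hsf hsg hgint
  have hFc : Continuous (fun y => g y - deriv f y) :=
    hg.continuous.sub (hf.iterate_deriv' 1 1).continuous
  have hev : ∀ᶠ y in nhds β, (g β - deriv f β)/2 < g y - deriv f y :=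
    hFc.continuousAt.eventually_const_lt (by linarith)
  obtain ⟨δ0, hδ0, hδball⟩ := Metric.eventually_nhds_iff.mp hev
  set c1 : ℝ := (g β - deriv f β)/4 with hc1def
  have hc1 : 0 < c1 := by rw [hc1def]; linarith
  set δ : ℝ := min (δ0/2) (R/2) with hδdef
  have hδ : 0 < δ := lt_min (by linarith) (by linarith)
  have hδR : δ ≤ R/2 := min_le_right _ _
  have hF : ∀ y ∈ Icc (β - δ) (β + δ), 2*c1 ≤ g y - deriv f y := by
    intro y hy
    have hyd : dist y β < δ0 := by
      rw [Real.dist_eq, abs_sub_lt_iff]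
      have h1 := min_le_left (δ0/2) (R/2)
      constructor <;> [skip; skip] <;>
        · rcases hy with ⟨hy1, hy2⟩
          simp only [hδdef] at hy1 hy2 ⊢
          linarith
    have := hδball hyd
    rw [hc1def]; linarith
  -- constants
  set Ka : ℝ := max ((2:ℝ) ^ (1+a)) 1 with hKadef
  have hKa0 : (0:ℝ) < Ka := lt_of_lt_of_le one_pos (le_max_right _ _)
  set c2 : ℝ := δ * c1 ^ p / (2 * Ka) with hc2def
  have hc2 : 0 < c2 := by
    apply div_pos (mul_pos hδ (Real.rpow_pos_of_pos hc1 _)) (by linarith)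
  set Ka' : ℝ := max ((6:ℝ) ^ (1+a)) ((4:ℝ) ^ (1+a)) with hKa'def
  have hKa'0 : (0:ℝ) < Ka' := lt_of_lt_of_le (Real.rpow_pos_of_pos (by norm_num) _) (le_max_left _ _)
  set m0 : ℝ := min ((2:ℝ) ^ (-(1+a))) 1 with hm0def
  have hm0 : (0:ℝ) < m0 := lt_min (Real.rpow_pos_of_pos (by norm_num) _) one_pos
  have hm01 : m0 ≤ 1 := min_le_right _ _
  set d : ℝ := -(p * (1 + a)) - b with hddef
  have hd : 0 < d := by rw [hddef]; linarith
  set Q : ℝ := (p - 1) / (2 * 2 ^ p) * (Ka'⁻¹ / 4) with hQdef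
  have hQ : 0 < Q := by
    apply mul_pos (div_pos (by linarith) (by positivity)) (by positivity)
  set B' : ℝ := (c2 * m0) ^ (1 - p) with hB'def
  have hB' : 0 < B' := Real.rpow_pos_of_pos (by positivity) _
  set CK : ℝ := (B'/Q + 1) ^ (1/d) with hCKdef
  have hCK : 0 < CK := Real.rpow_pos_of_pos (by positivity) _
  refine ⟨1, one_pos, 3 * (CK + 8*R + 8), by positivity, ?_⟩
  intro ε hε0 hε1 T hT ⟨U, hUc, _, hUeq⟩
  -- scale
  set εθ : ℝ := ε ^ (-(p * (p - 1)) / (-(p * (1 + a)) - b)) with hεθdef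
  have hεθ0 : 0 < εθ := Real.rpow_pos_of_pos hε0 _
  have hεθ1 : 1 ≤ εθ := by
    apply Real.one_le_rpow_of_pos_of_le_one_of_nonpos hε0 hε1
    apply div_nonpos_of_nonpos_of_nonneg (by nlinarith) (by rw [← hddef]; linarith)
  set L : ℝ := T / 3 with hLdef
  have hLlow : CK * εθ + (8*R + 8) ≤ L := by
    have h1 : (CK + 8*R + 8) * εθ ≤ L := by
      rw [hLdef]; linarith
    nlinarith [hεθ1, hR, hCK]
  have hL8 : 8*R + 8 ≤ L := by nlinarith [mul_pos hCK hεθ0]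
  have hL2 : (2:ℝ) ≤ L := by linarith
  have hL0 : (0:ℝ) < L := by linarith
  have hLCK : CK * εθ ≤ L := by nlinarith [hR]
  have h3LT : 3 * L ≤ T := by rw [hLdef]; linarith
  set T0 : ℝ := 5*L/2 with hT0def
  have hT03L : T0 ≤ 3*L := by rw [hT0def]; linarith
  have hT00 : (0:ℝ) ≤ T0 := by rw [hT0def]; linarith
  -- seed value
  set et : ℝ := c2 * m0 * ε ^ p * L ^ (-(1+a)) with hetdef
  have het : 0 < et := by
    apply mul_pos (mul_pos (mul_pos hc2 hm0) (Real.rpow_pos_of_pos hε0 _))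
      (Real.rpow_pos_of_pos hL0 _)
  -- clamping
  set cl : ℝ → ℝ := fun s => max T0 (min s (3*L)) with hcldef
  have hclc : Continuous cl := continuous_const.max (continuous_id.min continuous_const)
  have hclmem : ∀ s, cl s ∈ Icc T0 (3*L) := by
    intro s
    constructor
    · exact le_max_left _ _
    · rw [hcldef]; simp only [max_le_iff]
      exact ⟨hT03L, min_le_right _ _⟩
  have hcleq : ∀ t ∈ Icc T0 (3*L), cl t = t := by
    intro t htm
    rw [hcldef]
    simp only
    rw [min_eq_left htm.2, max_eq_right htm.1]
  set Φ : ℝ → ℝ := fun s => U (cl s - 4*L) (cl s) with hΦdef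
  set K : ℝ → ℝ := fun s => (jb (cl s + jb (cl s - 4*L)) ^ (1+a) *
      jb (cl s - jb (cl s - 4*L)) ^ (1+b))⁻¹ with hKdef
  set k : ℝ → ℝ := fun s => Ka'⁻¹ * L ^ (-(1+a)) *
      (max 1 (2 * cl s - 4*L - 1)) ^ (-(1+b)) with hkdef
  -- continuity facts
  have hΦc : Continuous Φ := by
    have hmap : ∀ s : ℝ, ((cl s - 4*L, cl s) : ℝ × ℝ) ∈
        ((Set.univ : Set ℝ) ×ˢ Set.Icc (0:ℝ) T) := by
      intro s
      exact ⟨trivial, le_trans hT00 (hclmem s).1, le_trans (hclmem s).2 h3LT⟩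
    exact hUc.comp_continuous (by continuity) hmap
  have hKc : Continuous K := by
    apply Continuous.inv₀
    · apply Continuous.mul
      · apply Continuous.rpow_const
        · exact continuous_jb.comp (hclc.add (continuous_jb.comp (hclc.sub continuous_const)))
        · exact fun s => Or.inl (jb_pos _).ne'
      · apply Continuous.rpow_const
        · exact continuous_jb.comp (hclc.sub (continuous_jb.comp (hclc.sub continuous_const)))
        · exact fun s => Or.inl (jb_pos _).ne'
    · exact fun s => (denom_pos a b _ _).ne'
  have hmaxpos : ∀ s : ℝ, (0:ℝ) < max 1 (2 * cl s - 4*L - 1) :=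
    fun s => lt_of_lt_of_le one_pos (le_max_left _ _)
  have hkc : Continuous k := by
    apply Continuous.mul continuous_const
    apply Continuous.rpow_const
    · exact continuous_const.max ((continuous_const.mul hclc).sub continuous_const |>.sub continuous_const)
    · exact fun s => Or.inl (hmaxpos s).ne'
  have hKnn : ∀ s, 0 ≤ K s := fun s => inv_nonneg.mpr (denom_pos a b _ _).le
  have hknn : ∀ s, 0 ≤ k s := by
    intro s
    apply mul_nonneg (mul_nonneg (inv_nonneg.mpr hKa'0.le) (Real.rpow_nonneg hL0.le _))
    exact Real.rpow_nonneg (hmaxpos s).le _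
  -- k ≤ K on the window
  have hkK : ∀ s ∈ Icc T0 (3*L), k s ≤ K s := by
    intro s hsm
    have hcls := hcleq s hsm
    have hsl : 5*L/2 ≤ s := by rw [hT0def] at hsm; exact hsm.1
    have hsu : s ≤ 3*L := hsm.2
    have hy1 : 4*L - s ≤ jb (s - 4*L) := by
      have := abs_le_jb (s - 4*L)
      rw [abs_of_nonpos (by linarith : s - 4*L ≤ 0)] at this
      linarith
    have hy2 : jb (s - 4*L) ≤ 1 + (4*L - s) := by
      have := jb_le (s - 4*L)
      rw [abs_of_nonpos (by linarith : s - 4*L ≤ 0)] at this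
      linarith
    have hz1 : 4*L ≤ s + jb (s - 4*L) := by linarith
    have hz2 : s + jb (s - 4*L) ≤ 4*L + 1 := by linarith
    have hw1l : 4*L ≤ jb (s + jb (s - 4*L)) := le_trans hz1 (le_jb _)
    have hw1u : jb (s + jb (s - 4*L)) ≤ 6*L := by
      have := jb_le' (by linarith : (0:ℝ) ≤ s + jb (s - 4*L))
      linarith
    have hLp : (0:ℝ) < L ^ (1+a) := Real.rpow_pos_of_pos hL0 _
    have hden1 : jb (s + jb (s - 4*L)) ^ (1+a) ≤ Ka' * L ^ (1+a) := by
      rcases le_or_gt 0 (1+a) with hA | hA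
      · have h1 : jb (s + jb (s - 4*L)) ^ (1+a) ≤ (6*L) ^ (1+a) :=
          Real.rpow_le_rpow (jb_pos _).le hw1u hA
        have h2 : ((6:ℝ)*L) ^ (1+a) = 6 ^ (1+a) * L ^ (1+a) :=
          Real.mul_rpow (by norm_num) hL0.le
        have h3 : (6:ℝ) ^ (1+a) ≤ Ka' := le_max_left _ _
        calc jb (s + jb (s - 4*L)) ^ (1+a) ≤ (6*L) ^ (1+a) := h1
          _ = 6 ^ (1+a) * L ^ (1+a) := h2
          _ ≤ Ka' * L ^ (1+a) := mul_le_mul_of_nonneg_right h3 hLp.le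
      · have h1 : jb (s + jb (s - 4*L)) ^ (1+a) ≤ (4*L) ^ (1+a) :=
          Real.rpow_le_rpow_of_nonpos (by linarith) hw1l hA.le
        have h2 : ((4:ℝ)*L) ^ (1+a) = 4 ^ (1+a) * L ^ (1+a) :=
          Real.mul_rpow (by norm_num) hL0.le
        have h3 : (4:ℝ) ^ (1+a) ≤ Ka' := le_max_right _ _
        calc jb (s + jb (s - 4*L)) ^ (1+a) ≤ (4*L) ^ (1+a) := h1
          _ = 4 ^ (1+a) * L ^ (1+a) := h2
          _ ≤ Ka' * L ^ (1+a) := mul_le_mul_of_nonneg_right h3 hLp.le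
    -- second factor
    have hwlb : 2*s - 4*L - 1 ≤ s - jb (s - 4*L) := by linarith
    have hMval : max 1 (2*s - 4*L - 1) = 2*s - 4*L - 1 :=
      max_eq_right (by linarith)
    have hMle : max 1 (2*s - 4*L - 1) ≤ jb (s - jb (s - 4*L)) := by
      rw [hMval]
      exact le_trans hwlb (le_jb _)
    have hMpos : (0:ℝ) < max 1 (2*s - 4*L - 1) := lt_of_lt_of_le one_pos (le_max_left _ _)
    have hden2 : jb (s - jb (s - 4*L)) ^ (1+b) ≤ (max 1 (2*s - 4*L - 1)) ^ (1+b) :=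
      Real.rpow_le_rpow_of_nonpos hMpos hMle hb1
    have hd1pos : (0:ℝ) < jb (s + jb (s - 4*L)) ^ (1+a) := Real.rpow_pos_of_pos (jb_pos _) _
    have hd2pos : (0:ℝ) < jb (s - jb (s - 4*L)) ^ (1+b) := Real.rpow_pos_of_pos (jb_pos _) _
    have hM2pos : (0:ℝ) < (max 1 (2*s - 4*L - 1)) ^ (1+b) := Real.rpow_pos_of_pos hMpos _
    have hprod : jb (s + jb (s - 4*L)) ^ (1+a) * jb (s - jb (s - 4*L)) ^ (1+b)
        ≤ (Ka' * L ^ (1+a)) * (max 1 (2*s - 4*L - 1)) ^ (1+b) := by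
      apply mul_le_mul hden1 hden2 hd2pos.le (by positivity)
    have hKval : K s = (jb (s + jb (s - 4*L)) ^ (1+a) * jb (s - jb (s - 4*L)) ^ (1+b))⁻¹ := by
      rw [hKdef]; simp only; rw [hcls]
    have hkval : k s = Ka'⁻¹ * L ^ (-(1+a)) * (max 1 (2*s - 4*L - 1)) ^ (-(1+b)) := by
      rw [hkdef]; simp only; rw [hcls]
    rw [hKval, hkval]
    have hinv : ((Ka' * L ^ (1+a)) * (max 1 (2*s - 4*L - 1)) ^ (1+b))⁻¹
        ≤ (jb (s + jb (s - 4*L)) ^ (1+a) * jb (s - jb (s - 4*L)) ^ (1+b))⁻¹ := by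
      apply inv_anti₀ (by positivity) hprod
    have heq : ((Ka' * L ^ (1+a)) * (max 1 (2*s - 4*L - 1)) ^ (1+b))⁻¹
        = Ka'⁻¹ * L ^ (-(1+a)) * (max 1 (2*s - 4*L - 1)) ^ (-(1+b)) := by
      rw [Real.rpow_neg hL0.le, Real.rpow_neg hMpos.le, mul_inv, mul_inv]
    rw [← heq]
    exact hinv
  -- seed bound
  have hseed : ∀ t ∈ Icc T0 (3*L), et ≤ Φ t := by
    intro t htm
    have hclt := hcleq t htm
    have htl : 5*L/2 ≤ t := by rw [hT0def] at htm; exact htm.1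
    have htu : t ≤ 3*L := htm.2
    have ht0' : (0:ℝ) ≤ t := by linarith
    have htT' : t ≤ T := le_trans htu h3LT
    have hstep2 := step2 (U := U) hp hb1 hR hε0 hc1 hδ hδR hβR hsf hsg hF hUc hUeq
      (x := t - 4*L) ht0' htT' (by linarith) (by linarith)
    have hXeq : t - 4*L + t = 2*t - 4*L := by ring
    rw [hXeq] at hstep2
    have hXpos : (0:ℝ) < 2*t - 4*L := by linarith
    have hkey2 : m0 * L ^ (-(1+a)) ≤ (2*t - 4*L) ^ (-(1+a)) := by
      rcases le_or_gt 0 (1+a) with hA | hA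
      · have h1 : (2*L) ^ (-(1+a)) ≤ (2*t - 4*L) ^ (-(1+a)) :=
          Real.rpow_le_rpow_of_nonpos hXpos (by linarith) (by linarith)
        have h2 : ((2:ℝ)*L) ^ (-(1+a)) = 2 ^ (-(1+a)) * L ^ (-(1+a)) :=
          Real.mul_rpow (by norm_num) hL0.le
        have h3 : m0 ≤ (2:ℝ) ^ (-(1+a)) := min_le_left _ _
        have h4 : (0:ℝ) < L ^ (-(1+a)) := Real.rpow_pos_of_pos hL0 _
        calc m0 * L ^ (-(1+a)) ≤ (2:ℝ) ^ (-(1+a)) * L ^ (-(1+a)) :=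
              mul_le_mul_of_nonneg_right h3 h4.le
          _ = (2*L) ^ (-(1+a)) := h2.symm
          _ ≤ (2*t - 4*L) ^ (-(1+a)) := h1
      · have h1 : L ^ (-(1+a)) ≤ (2*t - 4*L) ^ (-(1+a)) :=
          Real.rpow_le_rpow hL0.le (by linarith) (by linarith)
        have h4 : (0:ℝ) < L ^ (-(1+a)) := Real.rpow_pos_of_pos hL0 _
        calc m0 * L ^ (-(1+a)) ≤ 1 * L ^ (-(1+a)) :=
              mul_le_mul_of_nonneg_right hm01 h4.le
          _ = L ^ (-(1+a)) := one_mul _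
          _ ≤ (2*t - 4*L) ^ (-(1+a)) := h1
    have hconv : δ/2 * (ε*c1) ^ p / (max ((2:ℝ) ^ (1+a)) 1 * (2*t - 4*L) ^ (1+a))
        = c2 * ε ^ p * (2*t - 4*L) ^ (-(1+a)) := by
      rw [Real.mul_rpow hε0.le hc1.le, Real.rpow_neg hXpos.le, hc2def, hKadef]
      have hXp : (0:ℝ) < (2*t - 4*L) ^ (1+a) := Real.rpow_pos_of_pos hXpos _
      field_simp
    rw [hconv] at hstep2
    have hεp : (0:ℝ) < ε ^ p := Real.rpow_pos_of_pos hε0 _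
    have hchain : et ≤ c2 * ε ^ p * (2*t - 4*L) ^ (-(1+a)) := by
      rw [hetdef]
      calc c2 * m0 * ε ^ p * L ^ (-(1+a)) = (c2 * ε ^ p) * (m0 * L ^ (-(1+a))) := by ring
        _ ≤ (c2 * ε ^ p) * ((2*t - 4*L) ^ (-(1+a))) := by
            apply mul_le_mul_of_nonneg_left hkey2 (by positivity)
        _ = c2 * ε ^ p * (2*t - 4*L) ^ (-(1+a)) := by ring
    have hΦval : Φ t = U (t - 4*L) t := by rw [hΦdef]; simp only; rw [hclt]
    rw [hΦval]
    linarith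
  -- growth bound
  have hgrow : ∀ t ∈ Icc T0 (3*L), (1/2) * (∫ s in T0..t, |Φ s| ^ p * K s) ≤ Φ t := by
    intro t htm
    have hclt := hcleq t htm
    have htl : 5*L/2 ≤ t := by rw [hT0def] at htm; exact htm.1
    have htu : t ≤ 3*L := htm.2
    have ht0' : (0:ℝ) ≤ t := by linarith
    have htT' : t ≤ T := le_trans htu h3LT
    have hΦval : Φ t = U (t - 4*L) t := by rw [hΦdef]; simp only; rw [hclt]
    rw [hΦval, hUeq (t - 4*L) t ht0' htT']
    rw [ut0_far f g hR hsf hsg (by linarith) (by linarith)]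
    have hexp : Lab' a b (fun y s => |U y s| ^ p) (t - 4*L) t =
        (1/2) * (∫ s in (0:ℝ)..t, |U (t - 4*L + t - s) s| ^ p /
          (jb (s + jb (t - 4*L + t - s)) ^ (1 + a) * jb (s - jb (t - 4*L + t - s)) ^ (1 + b)))
        + (1/2) * (∫ s in (0:ℝ)..t, |U (t - 4*L - t + s) s| ^ p /
          (jb (s + jb (t - 4*L - t + s)) ^ (1 + a) * jb (s - jb (t - 4*L - t + s)) ^ (1 + b))) := rfl
    rw [hexp]
    have hI1 : 0 ≤ ∫ s in (0:ℝ)..t, |U (t - 4*L + t - s) s| ^ p /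
        (jb (s + jb (t - 4*L + t - s)) ^ (1 + a) * jb (s - jb (t - 4*L + t - s)) ^ (1 + b)) :=
      intervalIntegral.integral_nonneg ht0' (fun s _ => integrand_nonneg _ _ _ _ hp0)
    have hT0t : T0 ≤ t := htm.1
    have hint2 := integrand_integrable (U := U) (T := T) (a := a) (b := b) hp0 hUc
      (φ := fun s => t - 4*L - t + s) (continuous_const.add continuous_id : Continuous (fun s : ℝ => t - 4*L - t + s)) ht0' htT'
    have hρint : IntervalIntegrable (fun s => |U (t - 4*L - t + s) s| ^ p /
        (jb (s + jb (t - 4*L - t + s)) ^ (1 + a) * jb (s - jb (t - 4*L - t + s)) ^ (1 + b)))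
        volume T0 t := by
      apply ContinuousOn.intervalIntegrable
      rw [uIcc_of_le hT0t]
      apply (integrand_cont (U := U) (T := T) (a := a) (b := b) hp0 hUc
        (continuous_const.add continuous_id : Continuous (fun s : ℝ => t - 4*L - t + s))).mono
      exact Icc_subset_Icc hT00 htT'
    have hkey := key_lower hT00 hT0t le_rfl hint2
      (fun s _ => integrand_nonneg _ _ _ _ hp0) hρint (fun s _ => le_rfl)
    have hcongr : (∫ s in T0..t, |U (t - 4*L - t + s) s| ^ p /
        (jb (s + jb (t - 4*L - t + s)) ^ (1 + a) * jb (s - jb (t - 4*L - t + s)) ^ (1 + b)))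
        = ∫ s in T0..t, |Φ s| ^ p * K s := by
      apply intervalIntegral.integral_congr
      intro s hsm
      rw [uIcc_of_le hT0t] at hsm
      have hcls : cl s = s := hcleq s ⟨hsm.1, le_trans hsm.2 htu⟩
      have harg : t - 4*L - t + s = s - 4*L := by ring
      simp only [hΦdef, hKdef]
      rw [hcls, harg, div_eq_mul_inv]
    rw [hcongr] at hkey
    linarith
  -- apply the blow-up engine
  have heng := engine p et T0 (3*L) Φ K k hp het (by linarith) hΦc hKc hkc hKnn hknn hkK hseed hgrow
  -- lower bound for the integral of k
  have hkint1 : IntervalIntegrable k volume T0 (11*L/4) := hkc.intervalIntegrable _ _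
  have hkint2 : IntervalIntegrable k volume (11*L/4) (3*L) := hkc.intervalIntegrable _ _
  have hsplit : (∫ s in T0..(11*L/4), k s) + (∫ s in (11*L/4)..(3*L), k s)
      = ∫ s in T0..(3*L), k s :=
    intervalIntegral.integral_add_adjacent_intervals hkint1 hkint2
  have hn1 : 0 ≤ ∫ s in T0..(11*L/4), k s :=
    intervalIntegral.integral_nonneg (by rw [hT0def]; linarith) (fun s _ => hknn s)
  have hconstle : ∀ s ∈ Icc (11*L/4) (3*L), Ka'⁻¹ * L ^ (-(1+a)) * L ^ (-(1+b)) ≤ k s := by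
    intro s hsm
    have hcls : cl s = s := hcleq s ⟨by rw [hT0def]; linarith [hsm.1], hsm.2⟩
    have hkval : k s = Ka'⁻¹ * L ^ (-(1+a)) * (max 1 (2*s - 4*L - 1)) ^ (-(1+b)) := by
      rw [hkdef]; simp only; rw [hcls]
    rw [hkval]
    have hbase : L ≤ max 1 (2*s - 4*L - 1) := by
      apply le_trans _ (le_max_right _ _)
      linarith [hsm.1]
    have h1 : L ^ (-(1+b)) ≤ (max 1 (2*s - 4*L - 1)) ^ (-(1+b)) :=
      Real.rpow_le_rpow hL0.le hbase (by linarith)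
    apply mul_le_mul_of_nonneg_left h1
    exact mul_nonneg (inv_nonneg.mpr hKa'0.le) (Real.rpow_nonneg hL0.le _)
  have hmid : (L/4) * (Ka'⁻¹ * L ^ (-(1+a)) * L ^ (-(1+b))) ≤ ∫ s in (11*L/4)..(3*L), k s := by
    have := intervalIntegral.integral_mono_on (by linarith : 11*L/4 ≤ 3*L)
      (intervalIntegrable_const (c := Ka'⁻¹ * L ^ (-(1+a)) * L ^ (-(1+b)))) hkint2 hconstle
    rw [intervalIntegral.integral_const, smul_eq_mul] at this
    calc (L/4) * (Ka'⁻¹ * L ^ (-(1+a)) * L ^ (-(1+b)))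
        = (3*L - 11*L/4) * (Ka'⁻¹ * L ^ (-(1+a)) * L ^ (-(1+b))) := by ring
      _ ≤ _ := this
  have hintk : (L/4) * (Ka'⁻¹ * L ^ (-(1+a)) * L ^ (-(1+b))) ≤ ∫ s in T0..(3*L), k s := by
    linarith
  -- combine
  have h2p : (0:ℝ) < 2 ^ p := Real.rpow_pos_of_pos two_pos _
  have hfinal1 : (p - 1) / (2 * 2 ^ p) * ((L/4) * (Ka'⁻¹ * L ^ (-(1+a)) * L ^ (-(1+b))))
      ≤ et ^ (1 - p) := by
    apply le_trans _ heng
    apply mul_le_mul_of_nonneg_left hintk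
    apply div_nonneg (by linarith) (by positivity)
  -- rewrite powers of L
  have hLpow : (L/4) * (Ka'⁻¹ * L ^ (-(1+a)) * L ^ (-(1+b)))
      = (Ka'⁻¹/4) * (L ^ (-(1+a)-b)) := by
    have h1 : L ^ (-(1+a)) * L ^ (-(1+b)) * L ^ (1:ℝ) = L ^ (-(1+a) + -(1+b) + 1) := by
      rw [Real.rpow_add hL0, Real.rpow_add hL0]
    have h2 : -(1+a) + -(1+b) + 1 = -(1+a)-b := by ring
    rw [h2] at h1
    rw [Real.rpow_one] at h1
    linear_combination (Ka'⁻¹/4) * h1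
  rw [hLpow] at hfinal1
  -- expand et ^ (1-p)
  have hetrw : et ^ (1 - p) = B' * ε ^ (p*(1-p)) * L ^ ((1+a)*(p-1)) := by
    rw [hetdef, hB'def]
    have hεp : (0:ℝ) < ε ^ p := Real.rpow_pos_of_pos hε0 _
    have hLm : (0:ℝ) < L ^ (-(1+a)) := Real.rpow_pos_of_pos hL0 _
    rw [show c2 * m0 * ε ^ p * L ^ (-(1+a)) = (c2*m0) * (ε ^ p) * (L ^ (-(1+a))) from by ring]
    rw [Real.mul_rpow (by positivity) hLm.le, Real.mul_rpow (by positivity) hεp.le]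
    rw [← Real.rpow_mul hε0.le, ← Real.rpow_mul hL0.le]
    congr 1
    ring
  rw [hetrw] at hfinal1
  -- split L powers
  have hsplitL : L ^ (-(1+a)-b) = L ^ d * L ^ ((1+a)*(p-1)) := by
    rw [← Real.rpow_add hL0]
    congr 1
    rw [hddef]; ring
  rw [hsplitL] at hfinal1
  have hLe : (0:ℝ) < L ^ ((1+a)*(p-1)) := Real.rpow_pos_of_pos hL0 _
  have hmain : Q * L ^ d ≤ B' * ε ^ (p*(1-p)) := by
    have h1 : (Q * L ^ d) * L ^ ((1+a)*(p-1)) ≤ (B' * ε ^ (p*(1-p))) * L ^ ((1+a)*(p-1)) := by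
      calc (Q * L ^ d) * L ^ ((1+a)*(p-1))
          = (p - 1) / (2 * 2 ^ p) * ((Ka'⁻¹/4) * (L ^ d * L ^ ((1+a)*(p-1)))) := by
            rw [hQdef]; ring
        _ ≤ B' * ε ^ (p*(1-p)) * L ^ ((1+a)*(p-1)) := by linarith [hfinal1]
    exact le_of_mul_le_mul_right h1 hLe
  -- lower bound for Q * L ^ d
  have hLd : (B'/Q + 1) * ε ^ (p*(1-p)) ≤ L ^ d := by
    have h1 : (CK * εθ) ^ d ≤ L ^ d :=
      Real.rpow_le_rpow (by positivity) hLCK hd.le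
    have h2 : (CK * εθ) ^ d = CK ^ d * εθ ^ d := Real.mul_rpow hCK.le hεθ0.le
    have h3 : CK ^ d = B'/Q + 1 := by
      rw [hCKdef, ← Real.rpow_mul (by positivity), one_div_mul_cancel hd.ne', Real.rpow_one]
    have h4 : εθ ^ d = ε ^ (p*(1-p)) := by
      rw [hεθdef, ← hddef, ← Real.rpow_mul hε0.le]
      congr 1
      field_simp
      ring
    rw [h2, h3, h4] at h1
    exact h1
  have hεppos : (0:ℝ) < ε ^ (p*(1-p)) := Real.rpow_pos_of_pos hε0 _
  have hcontra : (B'/Q + 1) * ε ^ (p*(1-p)) * Q ≤ B' * ε ^ (p*(1-p)) := by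
    have h7 := mul_le_mul_of_nonneg_right hLd hQ.le
    calc (B'/Q + 1) * ε ^ (p*(1-p)) * Q = (B'/Q + 1) * ε ^ (p*(1-p)) * Q := rfl
      _ ≤ L ^ d * Q := h7
      _ = Q * L ^ d := by ring
      _ ≤ B' * ε ^ (p*(1-p)) := hmain
  have hQB : (B'/Q + 1) * Q = B' + Q := by field_simp
  have h8 : (B' + Q) * ε ^ (p*(1-p)) ≤ B' * ε ^ (p*(1-p)) := by
    calc (B' + Q) * ε ^ (p*(1-p)) = (B'/Q + 1) * ε ^ (p*(1-p)) * Q := by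
          rw [← hQB]; ring
      _ ≤ B' * ε ^ (p*(1-p)) := hcontra
  have h9 : 0 < Q * ε ^ (p*(1-p)) := mul_pos hQ hεppos
  nlinarith only [h8, h9]
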